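/- Let X be a real random variable with finite moments of all orders, let n, k ≥ 1, set m = n(2k−1), and let X₁, …, X_n be i.i.d. copies of X. Define the polynomial p_{n,k}(x) = E[(X₁ − x)^{2k−1}·(X₂ − x)^{2k−1}⋯(X_n − x)^{2k−1} · Δ(X₁,…,X_n)^{2k}]. Then: (a) E[q(X) · p_{n,k}(X)] = 0 for every polynomial q of degree at most n−1 (equivalently, E[X^l · p_{n,k}(X)] = 0 for every l = 0,…,n−1); (b) writing p_{n,k}(x) = ∑_{h=0}^m C(m,h)·(−1)^h·b_{m−h}·x^h with C(m,h) the binomial coefficient, if the polynomial A_m(x) := E[(X − x)^m] has m pairwise distinct complex roots r₁, …, r_m and the linear system b_{m−l} = ∑_{j=1}^m c_j·r_j^{m−l} (l = 0, 1, …, m) admits a solution (c₁,…,c_m) ∈ ℂ^m, then ∑_{j=1}^m c_j = E[Δ(X₁,…,X_n)^{2k}]. -/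

import Mathlib

open MeasureTheory ProbabilityTheory Filter
open scoped BigOperators Topology

noncomputable section

/-- The Vandermonde product `Δ(y₀,…,y_{k-1}) = ∏_{i<j} (y_j − y_i)`. -/
def vdm {R : Type*} [CommRing R] {k : ℕ} (y : Fin k → R) : R :=
  ∏ p ∈ Finset.univ.filter (fun p : Fin k × Fin k => p.1 < p.2), (y p.2 - y p.1)

lemma vdm_eq_det {R : Type*} [CommRing R] {K : ℕ} (y : Fin K → R) :
    vdm y = (Matrix.vandermonde y).det := by
  rw [Matrix.det_vandermonde, vdm]
  rw [Finset.prod_sigma']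
  refine Finset.prod_nbij' (fun p => ⟨p.1, p.2⟩) (fun x => (x.1, x.2)) ?_ ?_ ?_ ?_ ?_ <;>
    simp [Finset.mem_sigma, Finset.mem_filter]

lemma vdm_comp_perm {K : ℕ} (y : Fin K → ℝ) (σ : Equiv.Perm (Fin K)) :
    vdm (y ∘ σ) = ((Equiv.Perm.sign σ : ℤ) : ℝ) * vdm y := by
  rw [vdm_eq_det, vdm_eq_det]
  have h : Matrix.vandermonde (y ∘ σ) = (Matrix.vandermonde y).submatrix σ id := by
    ext i j; simp [Matrix.vandermonde]
  rw [h, Matrix.det_permute]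

lemma vdm_succ {K : ℕ} (y : Fin (K + 1) → ℝ) :
    vdm y = (∏ i : Fin K, (y i.succ - y 0)) * vdm (y ∘ Fin.succ) := by
  rw [vdm_eq_det, vdm_eq_det, Matrix.det_vandermonde, Matrix.det_vandermonde,
    Fin.prod_univ_succ]
  congr 1
  · exact Fin.prod_Ioi_zero (f := fun j => y j - y 0)
  · refine Finset.prod_congr rfl fun i _ => ?_
    rw [Fin.prod_Ioi_succ]
    rfl

lemma sign_cast_pow_odd {K : ℕ} (σ : Equiv.Perm (Fin K)) {m : ℕ} (hm : Odd m) :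
    (((Equiv.Perm.sign σ : ℤ) : ℝ)) ^ m = ((Equiv.Perm.sign σ : ℤ) : ℝ) := by
  rcases Int.units_eq_one_or (Equiv.Perm.sign σ) with h | h <;> simp [h, hm.neg_one_pow]

lemma sum_perm_det_zero (n l : ℕ) (hl : l < n) (y : Fin (n + 1) → ℝ) :
    ∑ σ : Equiv.Perm (Fin (n + 1)),
      ((Equiv.Perm.sign σ : ℤ) : ℝ) * (y (σ 0) ^ l * vdm (y ∘ σ ∘ Fin.succ)) = 0 := by
  classical
  set M : Matrix (Fin (n + 1)) (Fin (n + 1)) ℝ :=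
    fun i => Fin.cons (y i ^ l) (fun j : Fin n => y i ^ (j : ℕ)) with hM
  have hdet : M.det = 0 := by
    refine Matrix.det_zero_of_column_eq (i := (⟨l, hl⟩ : Fin n).succ) (j := 0)
      (Fin.succ_ne_zero _) fun r => ?_
    have h1 : M r (⟨l, hl⟩ : Fin n).succ = y r ^ l := Fin.cons_succ _ _ _
    have h2 : M r 0 = y r ^ l := Fin.cons_zero _ _
    rw [h1, h2]
  have hD : ∑ ρ : Equiv.Perm (Fin (n + 1)),
      ((Equiv.Perm.sign ρ : ℤ) : ℝ) * (y (ρ 0) ^ l * ∏ j : Fin n, y (ρ j.succ) ^ (j : ℕ)) = 0 := by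
    rw [← hdet, Matrix.det_apply']
    refine Finset.sum_congr rfl fun ρ _ => ?_
    rw [Fin.prod_univ_succ]
    simp [hM, mul_assoc]
  calc ∑ σ : Equiv.Perm (Fin (n + 1)),
      ((Equiv.Perm.sign σ : ℤ) : ℝ) * (y (σ 0) ^ l * vdm (y ∘ σ ∘ Fin.succ))
      = ∑ σ : Equiv.Perm (Fin (n + 1)), ∑ τ : Equiv.Perm (Fin n),
          (((Equiv.Perm.sign σ : ℤ) : ℝ) * ((Equiv.Perm.sign τ : ℤ) : ℝ)) *
            (y (σ 0) ^ l * ∏ j : Fin n, y (σ ((τ j).succ)) ^ (j : ℕ)) := by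
        refine Finset.sum_congr rfl fun σ _ => ?_
        rw [vdm_eq_det, Matrix.det_apply', Finset.mul_sum, Finset.mul_sum]
        refine Finset.sum_congr rfl fun τ _ => ?_
        simp only [Matrix.vandermonde_apply, Function.comp_apply]
        ring
      _ = ∑ τ : Equiv.Perm (Fin n), ∑ σ : Equiv.Perm (Fin (n + 1)),
          (((Equiv.Perm.sign σ : ℤ) : ℝ) * ((Equiv.Perm.sign τ : ℤ) : ℝ)) *
            (y (σ 0) ^ l * ∏ j : Fin n, y (σ ((τ j).succ)) ^ (j : ℕ)) := Finset.sum_comm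
      _ = 0 := by
        refine Finset.sum_eq_zero fun τ _ => ?_
        set τh := Equiv.Perm.decomposeFin.symm (0, τ) with hτh
        have hsign : ((Equiv.Perm.sign τh : ℤ) : ℝ) = ((Equiv.Perm.sign τ : ℤ) : ℝ) := by
          rw [hτh, Equiv.Perm.decomposeFin.symm_sign]; simp
        have h0 : τh 0 = 0 := Equiv.Perm.decomposeFin_symm_apply_zero 0 τ
        have hsucc : ∀ j : Fin n, τh j.succ = (τ j).succ := by
          intro j
          rw [hτh, Equiv.Perm.decomposeFin_symm_apply_succ]
          simp
        calc ∑ σ : Equiv.Perm (Fin (n + 1)),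
            (((Equiv.Perm.sign σ : ℤ) : ℝ) * ((Equiv.Perm.sign τ : ℤ) : ℝ)) *
              (y (σ 0) ^ l * ∏ j : Fin n, y (σ ((τ j).succ)) ^ (j : ℕ))
            = ∑ σ : Equiv.Perm (Fin (n + 1)),
              (fun ρ : Equiv.Perm (Fin (n + 1)) => ((Equiv.Perm.sign ρ : ℤ) : ℝ) *
                (y (ρ 0) ^ l * ∏ j : Fin n, y (ρ j.succ) ^ (j : ℕ)))
                ((Equiv.mulRight τh) σ) := by
              refine Finset.sum_congr rfl fun σ _ => ?_
              simp only [Equiv.coe_mulRight, Equiv.Perm.mul_apply, Equiv.Perm.sign_mul,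
                Units.val_mul, Int.cast_mul, hsign, h0, hsucc]
          _ = 0 := (Equiv.sum_comp (Equiv.mulRight τh) _).trans hD

lemma Gsum_zero (n k l : ℕ) (hk : 1 ≤ k) (hl : l < n) (y : Fin (n + 1) → ℝ) :
    ∑ σ : Equiv.Perm (Fin (n + 1)),
      ((y ∘ σ) 0 ^ l * ((∏ i : Fin n, ((y ∘ σ) i.succ - (y ∘ σ) 0) ^ (2 * k - 1)) *
        vdm ((y ∘ σ) ∘ Fin.succ) ^ (2 * k))) = 0 := by
  have h2k : 2 * k = (2 * k - 1) + 1 := by omega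
  have hodd : Odd (2 * k - 1) := ⟨k - 1, by omega⟩
  calc ∑ σ : Equiv.Perm (Fin (n + 1)),
      ((y ∘ σ) 0 ^ l * ((∏ i : Fin n, ((y ∘ σ) i.succ - (y ∘ σ) 0) ^ (2 * k - 1)) *
        vdm ((y ∘ σ) ∘ Fin.succ) ^ (2 * k)))
      = ∑ σ : Equiv.Perm (Fin (n + 1)), vdm y ^ (2 * k - 1) *
          (((Equiv.Perm.sign σ : ℤ) : ℝ) * (y (σ 0) ^ l * vdm (y ∘ σ ∘ Fin.succ))) := by
        refine Finset.sum_congr rfl fun σ _ => ?_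
        have key : (∏ i : Fin n, ((y ∘ σ) i.succ - (y ∘ σ) 0)) * vdm ((y ∘ σ) ∘ Fin.succ)
            = ((Equiv.Perm.sign σ : ℤ) : ℝ) * vdm y := by
          rw [← vdm_succ (y ∘ σ), vdm_comp_perm]
        calc (y ∘ σ) 0 ^ l * ((∏ i : Fin n, ((y ∘ σ) i.succ - (y ∘ σ) 0) ^ (2 * k - 1)) *
              vdm ((y ∘ σ) ∘ Fin.succ) ^ (2 * k))
            = (y ∘ σ) 0 ^ l *
              (((∏ i : Fin n, ((y ∘ σ) i.succ - (y ∘ σ) 0)) * vdm ((y ∘ σ) ∘ Fin.succ)) ^ (2 * k - 1) *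
                vdm ((y ∘ σ) ∘ Fin.succ)) := by
              have hB : vdm ((y ∘ σ) ∘ Fin.succ) ^ (2 * k)
                  = vdm ((y ∘ σ) ∘ Fin.succ) ^ (2 * k - 1) * vdm ((y ∘ σ) ∘ Fin.succ) := by
                rw [← pow_succ, ← h2k]
              rw [Finset.prod_pow, mul_pow, hB]
              ring
          _ = (y ∘ σ) 0 ^ l *
              ((((Equiv.Perm.sign σ : ℤ) : ℝ) * vdm y) ^ (2 * k - 1) * vdm ((y ∘ σ) ∘ Fin.succ)) := by
              rw [key]
          _ = vdm y ^ (2 * k - 1) *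
              (((Equiv.Perm.sign σ : ℤ) : ℝ) * (y (σ 0) ^ l * vdm (y ∘ σ ∘ Fin.succ))) := by
              rw [mul_pow, sign_cast_pow_odd σ hodd]
              show y (σ 0) ^ l * _ = _
              ring_nf
              rfl
    _ = 0 := by
        rw [← Finset.mul_sum, sum_perm_det_zero n l hl y, mul_zero]

lemma integrable_pi_prod {d : ℕ} (μ : Measure ℝ) [IsProbabilityMeasure μ]
    {f : Fin d → ℝ → ℝ} (hf : ∀ i, Integrable (f i) μ) :
    Integrable (fun y : Fin d → ℝ => ∏ i, f i (y i)) (Measure.pi fun _ => μ) := by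
  induction d with
  | zero => simpa using integrable_const (1 : ℝ)
  | succ d ih =>
    have h := ((measurePreserving_piFinSuccAbove (fun _ : Fin (d + 1) => μ) 0).symm)
    rw [← h.integrable_comp_emb (MeasurableEquiv.measurableEmbedding _)]
    simp_rw [MeasurableEquiv.piFinSuccAbove_symm_apply, Fin.insertNthEquiv,
      Fin.prod_univ_succ, Fin.insertNth_zero]
    simp only [Fin.zero_succAbove, Function.comp_def, Fin.cons_zero, Fin.cons_succ,
      Equiv.coe_fn_mk]
    exact Integrable.mul_prod (hf 0) (ih (fun i => hf i.succ))

lemma map_tuple_eq_pi {Ω : Type*} [MeasurableSpace Ω] (P : Measure Ω) [IsProbabilityMeasure P]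
    {d : ℕ} (X : Fin d → Ω → ℝ) (hX : ∀ i, Measurable (X i))
    (hindep : iIndepFun X P) :
    P.map (fun ω i => X i ω) = Measure.pi (fun i => P.map (X i)) := by
  haveI : ∀ i, IsProbabilityMeasure (P.map (X i)) :=
    fun i => Measure.isProbabilityMeasure_map (hX i).aemeasurable
  refine (Measure.pi_eq fun s hs => ?_).symm
  rw [Measure.map_apply (measurable_pi_lambda _ hX) (MeasurableSet.univ_pi hs)]
  have hpre : (fun ω i => X i ω) ⁻¹' (Set.pi Set.univ s) = ⋂ i ∈ Finset.univ, X i ⁻¹' s i := by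
    ext ω; simp [Set.mem_pi]
  rw [hpre, hindep.measure_inter_preimage_eq_mul Finset.univ (fun i _ => hs i)]
  exact Finset.prod_congr rfl fun i _ => (Measure.map_apply (hX i) (hs i)).symm

lemma integrable_mv_eval {d : ℕ} (μ : Measure ℝ) [IsProbabilityMeasure μ]
    (hmom : ∀ j : ℕ, Integrable (fun x : ℝ => x ^ j) μ) (Q : MvPolynomial (Fin d) ℝ) :
    Integrable (fun y => MvPolynomial.eval y Q) (Measure.pi fun _ => μ) := by
  have h : (fun y : Fin d → ℝ => MvPolynomial.eval y Q)
      = fun y => ∑ dd ∈ Q.support, Q.coeff dd * ∏ i, y i ^ dd i := by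
    funext y; rw [MvPolynomial.eval_eq']
  rw [h]
  exact integrable_finset_sum _ fun dd _ =>
    (integrable_pi_prod μ (fun i => hmom (dd i))).const_mul _

lemma perm_measurePreserving {d : ℕ} (μ : Measure ℝ) [IsProbabilityMeasure μ]
    (σ : Equiv.Perm (Fin d)) :
    ∃ E : (Fin d → ℝ) ≃ᵐ (Fin d → ℝ), (⇑E = fun y => y ∘ σ) ∧
      MeasurePreserving E (Measure.pi fun _ => μ) (Measure.pi fun _ => μ) := by
  refine ⟨MeasurableEquiv.piCongrLeft (fun _ => ℝ) (σ⁻¹ : Equiv.Perm (Fin d)), ?_, ?_⟩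
  · funext y
    funext j
    rw [MeasurableEquiv.coe_piCongrLeft]
    have h := Equiv.piCongrLeft_apply_apply (fun _ => ℝ) (σ⁻¹ : Equiv.Perm (Fin d)) y
      ((σ⁻¹ : Equiv.Perm (Fin d)).symm j)
    simpa [Equiv.Perm.inv_def] using h
  · exact measurePreserving_piCongrLeft (fun _ => μ) _

lemma G_eval (n k l : ℕ) (y : Fin (n + 1) → ℝ) :
    MvPolynomial.eval y
      ((MvPolynomial.X 0) ^ l *
        ((∏ i : Fin n, (MvPolynomial.X i.succ - MvPolynomial.X 0) ^ (2 * k - 1)) *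
          (∏ p ∈ Finset.univ.filter (fun p : Fin n × Fin n => p.1 < p.2),
            (MvPolynomial.X (p.2.succ) - MvPolynomial.X (p.1.succ) :
              MvPolynomial (Fin (n + 1)) ℝ)) ^ (2 * k)))
      = y 0 ^ l * ((∏ i : Fin n, (y i.succ - y 0) ^ (2 * k - 1)) *
          vdm (y ∘ Fin.succ) ^ (2 * k)) := by
  simp [vdm, Function.comp]

lemma key_zero (μ : Measure ℝ) [IsProbabilityMeasure μ]
    (hmom : ∀ j : ℕ, Integrable (fun x : ℝ => x ^ j) μ)
    (n k l : ℕ) (hk : 1 ≤ k) (hl : l < n) :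
    ∫ y : Fin (n + 1) → ℝ,
      (y 0 ^ l * ((∏ i : Fin n, (y i.succ - y 0) ^ (2 * k - 1)) * vdm (y ∘ Fin.succ) ^ (2 * k)))
      ∂(Measure.pi fun _ => μ) = 0 := by
  set ν := (Measure.pi fun _ : Fin (n + 1) => μ) with hν
  set G : (Fin (n + 1) → ℝ) → ℝ := fun y =>
    y 0 ^ l * ((∏ i : Fin n, (y i.succ - y 0) ^ (2 * k - 1)) * vdm (y ∘ Fin.succ) ^ (2 * k))
    with hG
  have hGint : Integrable G ν := by
    have h := integrable_mv_eval μ hmom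
      ((MvPolynomial.X 0) ^ l *
        ((∏ i : Fin n, (MvPolynomial.X i.succ - MvPolynomial.X 0) ^ (2 * k - 1)) *
          (∏ p ∈ Finset.univ.filter (fun p : Fin n × Fin n => p.1 < p.2),
            (MvPolynomial.X (p.2.succ) - MvPolynomial.X (p.1.succ) :
              MvPolynomial (Fin (n + 1)) ℝ)) ^ (2 * k)))
    have heq : (fun y : Fin (n + 1) → ℝ => MvPolynomial.eval y
      ((MvPolynomial.X 0) ^ l *
        ((∏ i : Fin n, (MvPolynomial.X i.succ - MvPolynomial.X 0) ^ (2 * k - 1)) *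
          (∏ p ∈ Finset.univ.filter (fun p : Fin n × Fin n => p.1 < p.2),
            (MvPolynomial.X (p.2.succ) - MvPolynomial.X (p.1.succ) :
              MvPolynomial (Fin (n + 1)) ℝ)) ^ (2 * k)))) = G := by
      funext y; rw [G_eval]
    rwa [heq] at h
  have hperm : ∀ σ : Equiv.Perm (Fin (n + 1)),
      (∫ y, G (y ∘ σ) ∂ν = ∫ y, G y ∂ν) ∧ Integrable (fun y => G (y ∘ σ)) ν := by
    intro σ
    obtain ⟨E, hE, hMP⟩ := perm_measurePreserving μ σ
    have hcomp : (fun y => G (y ∘ σ)) = G ∘ E := by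
      funext y; rw [Function.comp_apply, hE]
    constructor
    · rw [hcomp]
      exact hMP.integral_comp' (f := E) G
    · rw [hcomp]
      exact (hMP.integrable_comp_emb E.measurableEmbedding).mpr hGint
  have hsum : ∑ σ : Equiv.Perm (Fin (n + 1)), ∫ y, G (y ∘ σ) ∂ν = 0 := by
    rw [← integral_finset_sum _ (fun σ _ => (hperm σ).2)]
    have hz : (fun y : Fin (n + 1) → ℝ => ∑ σ : Equiv.Perm (Fin (n + 1)), G (y ∘ σ))
        = fun _ => 0 := by
      funext y
      exact Gsum_zero n k l hk hl y
    rw [hz, integral_zero]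
  have hcard : ∑ σ : Equiv.Perm (Fin (n + 1)), ∫ y, G (y ∘ σ) ∂ν
      = (Fintype.card (Equiv.Perm (Fin (n + 1))) : ℝ) * ∫ y, G y ∂ν := by
    rw [Finset.sum_congr rfl fun σ _ => (hperm σ).1, Finset.sum_const, nsmul_eq_mul,
      Finset.card_univ]
  rw [hcard] at hsum
  have hcpos : (Fintype.card (Equiv.Perm (Fin (n + 1))) : ℝ) ≠ 0 := by
    simp [Fintype.card_perm, Nat.factorial_ne_zero]
  exact (mul_eq_zero.mp hsum).resolve_left hcpos

lemma G_integrable (μ : Measure ℝ) [IsProbabilityMeasure μ]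
    (hmom : ∀ j : ℕ, Integrable (fun x : ℝ => x ^ j) μ) (n k l : ℕ) :
    Integrable (fun y : Fin (n + 1) → ℝ =>
      y 0 ^ l * ((∏ i : Fin n, (y i.succ - y 0) ^ (2 * k - 1)) * vdm (y ∘ Fin.succ) ^ (2 * k)))
      (Measure.pi fun _ => μ) := by
  have h := integrable_mv_eval μ hmom
    ((MvPolynomial.X 0) ^ l *
      ((∏ i : Fin n, (MvPolynomial.X i.succ - MvPolynomial.X 0) ^ (2 * k - 1)) *
        (∏ p ∈ Finset.univ.filter (fun p : Fin n × Fin n => p.1 < p.2),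
          (MvPolynomial.X (p.2.succ) - MvPolynomial.X (p.1.succ) :
            MvPolynomial (Fin (n + 1)) ℝ)) ^ (2 * k)))
  have heq : (fun y : Fin (n + 1) → ℝ => MvPolynomial.eval y
    ((MvPolynomial.X 0) ^ l *
      ((∏ i : Fin n, (MvPolynomial.X i.succ - MvPolynomial.X 0) ^ (2 * k - 1)) *
        (∏ p ∈ Finset.univ.filter (fun p : Fin n × Fin n => p.1 < p.2),
          (MvPolynomial.X (p.2.succ) - MvPolynomial.X (p.1.succ) :
            MvPolynomial (Fin (n + 1)) ℝ)) ^ (2 * k))))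
      = fun y : Fin (n + 1) → ℝ =>
      y 0 ^ l * ((∏ i : Fin n, (y i.succ - y 0) ^ (2 * k - 1)) * vdm (y ∘ Fin.succ) ^ (2 * k)) := by
    funext y; rw [G_eval]
  rwa [heq] at h

lemma fubini_G (μ : Measure ℝ) [IsProbabilityMeasure μ]
    (hmom : ∀ j : ℕ, Integrable (fun x : ℝ => x ^ j) μ) (n k l : ℕ) :
    ∫ y : Fin (n + 1) → ℝ,
      (y 0 ^ l * ((∏ i : Fin n, (y i.succ - y 0) ^ (2 * k - 1)) * vdm (y ∘ Fin.succ) ^ (2 * k)))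
      ∂(Measure.pi fun _ => μ)
    = ∫ x : ℝ, x ^ l *
        ∫ z : Fin n → ℝ, ((∏ i, (z i - x) ^ (2 * k - 1)) * vdm z ^ (2 * k))
          ∂(Measure.pi fun _ => μ) ∂μ := by
  set νn := (Measure.pi fun _ : Fin n => μ) with hνn
  set g : ℝ × (Fin n → ℝ) → ℝ := fun p =>
    p.1 ^ l * ((∏ i, (p.2 i - p.1) ^ (2 * k - 1)) * vdm p.2 ^ (2 * k)) with hg
  set e := MeasurableEquiv.piFinSuccAbove (fun _ : Fin (n + 1) => ℝ) 0 with he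
  have hMP : MeasurePreserving e (Measure.pi fun _ => μ) (μ.prod νn) :=
    measurePreserving_piFinSuccAbove (fun _ : Fin (n + 1) => μ) 0
  have hge : ∀ y : Fin (n + 1) → ℝ, g (e y)
      = y 0 ^ l * ((∏ i : Fin n, (y i.succ - y 0) ^ (2 * k - 1)) * vdm (y ∘ Fin.succ) ^ (2 * k)) := by
    intro y
    rw [hg, he]
    have h1 : (MeasurableEquiv.piFinSuccAbove (fun _ : Fin (n + 1) => ℝ) 0) y
        = (y 0, y ∘ Fin.succ) := by
      refine Prod.ext ?_ ?_ <;>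
        simp [MeasurableEquiv.piFinSuccAbove_apply, Fin.zero_succAbove] <;> rfl
    rw [h1]
    rfl
  have hint : Integrable g (μ.prod νn) := by
    rw [← hMP.map_eq]
    refine (integrable_map_equiv e g).mpr ?_
    have : (g ∘ e) = fun y : Fin (n + 1) → ℝ =>
        y 0 ^ l * ((∏ i : Fin n, (y i.succ - y 0) ^ (2 * k - 1)) * vdm (y ∘ Fin.succ) ^ (2 * k)) := by
      funext y; exact hge y
    rw [this]
    exact G_integrable μ hmom n k l
  calc ∫ y : Fin (n + 1) → ℝ,
      (y 0 ^ l * ((∏ i : Fin n, (y i.succ - y 0) ^ (2 * k - 1)) * vdm (y ∘ Fin.succ) ^ (2 * k)))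
      ∂(Measure.pi fun _ => μ)
      = ∫ y : Fin (n + 1) → ℝ, g (e y) ∂(Measure.pi fun _ => μ) := by
        refine integral_congr_ae (Filter.EventuallyEq.of_eq ?_)
        funext y; rw [hge y]
    _ = ∫ p, g p ∂(μ.prod νn) := hMP.integral_comp' g
    _ = ∫ x, ∫ z, g (x, z) ∂νn ∂μ := integral_prod g hint
    _ = ∫ x : ℝ, x ^ l *
        ∫ z : Fin n → ℝ, ((∏ i, (z i - x) ^ (2 * k - 1)) * vdm z ^ (2 * k)) ∂νn ∂μ := by
        refine integral_congr_ae (Filter.EventuallyEq.of_eq ?_)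
        funext x
        rw [hg]
        show (∫ z, x ^ l * ((∏ i, (z i - x) ^ (2 * k - 1)) * vdm z ^ (2 * k)) ∂νn) = _
        exact integral_const_mul _ _

lemma continuous_vdm {K : ℕ} : Continuous fun z : Fin K → ℝ => vdm z := by
  unfold vdm
  exact continuous_finset_prod _ fun p _ => (continuous_apply p.2).sub (continuous_apply p.1)

lemma poly_coeff_eq {m : ℕ} (c d : ℕ → ℝ)
    (hcd : ∀ x : ℝ, ∑ h ∈ Finset.range (m + 1), c h * x ^ h
      = ∑ h ∈ Finset.range (m + 1), d h * x ^ h) (j : ℕ) (hj : j ≤ m) : c j = d j := by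
  have hp : ∀ (e : ℕ → ℝ) (x : ℝ),
      Polynomial.eval x (∑ h ∈ Finset.range (m + 1), Polynomial.C (e h) * Polynomial.X ^ h)
        = ∑ h ∈ Finset.range (m + 1), e h * x ^ h := by
    intro e x
    rw [Polynomial.eval_finset_sum]
    exact Finset.sum_congr rfl fun h _ => by simp
  have hpq : (∑ h ∈ Finset.range (m + 1), Polynomial.C (c h) * Polynomial.X ^ h)
      = ∑ h ∈ Finset.range (m + 1), Polynomial.C (d h) * Polynomial.X ^ h :=
    Polynomial.funext fun x => by rw [hp, hp]; exact hcd x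
  have hc := congrArg (fun p => Polynomial.coeff p j) hpq
  simpa [Polynomial.finset_sum_coeff, Polynomial.coeff_C_mul, Polynomial.coeff_X_pow,
    Finset.sum_ite_eq, Finset.mem_range, Nat.lt_succ_iff, hj] using hc

def vP (n : ℕ) : MvPolynomial (Fin n) ℝ :=
  ∏ p ∈ Finset.univ.filter (fun p : Fin n × Fin n => p.1 < p.2),
    (MvPolynomial.X p.2 - MvPolynomial.X p.1)

lemma vP_eval {n : ℕ} (z : Fin n → ℝ) : MvPolynomial.eval z (vP n) = vdm z := by
  simp [vP, vdm]

def Spoly (n k : ℕ) : Polynomial (MvPolynomial (Fin n) ℝ) :=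
  (∏ i : Fin n, (Polynomial.C (MvPolynomial.X i) - Polynomial.X) ^ (2 * k - 1)) *
    Polynomial.C ((vP n) ^ (2 * k))

lemma Spoly_eval (n k : ℕ) (z : Fin n → ℝ) (x : ℝ) :
    Polynomial.eval x ((Spoly n k).map (MvPolynomial.eval z))
      = (∏ i, (z i - x) ^ (2 * k - 1)) * vdm z ^ (2 * k) := by
  simp [Spoly, Polynomial.eval_prod, Polynomial.map_prod, vP_eval, vdm, vP]

lemma Spoly_natDegree_le (n k : ℕ) : (Spoly n k).natDegree ≤ n * (2 * k - 1) := by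
  refine le_trans (Polynomial.natDegree_mul_le) ?_
  rw [Polynomial.natDegree_C, add_zero]
  refine le_trans (Polynomial.natDegree_prod_le _ _) ?_
  have h1 : ∀ i : Fin n,
      ((Polynomial.C (MvPolynomial.X i : MvPolynomial (Fin n) ℝ) - Polynomial.X) ^ (2 * k - 1)).natDegree
        ≤ 2 * k - 1 := by
    intro i
    refine le_trans (Polynomial.natDegree_pow_le) ?_
    have h2 : (Polynomial.C (MvPolynomial.X i : MvPolynomial (Fin n) ℝ)
        - Polynomial.X).natDegree ≤ 1 :=
      le_trans (Polynomial.natDegree_sub_le _ _) (by simp)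
    calc (2 * k - 1) * (Polynomial.C (MvPolynomial.X i : MvPolynomial (Fin n) ℝ)
        - Polynomial.X).natDegree ≤ (2 * k - 1) * 1 := Nat.mul_le_mul_left _ h2
      _ = 2 * k - 1 := by omega
  refine le_trans (Finset.sum_le_sum (fun i _ => h1 i)) ?_
  simp [Finset.sum_const, Finset.card_univ, mul_comm]

lemma Spoly_coeff_top (n k : ℕ) :
    (Spoly n k).coeff (n * (2 * k - 1))
      = (-1 : MvPolynomial (Fin n) ℝ) ^ (n * (2 * k - 1)) * (vP n) ^ (2 * k) := by
  rw [Spoly, Polynomial.coeff_mul_C]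
  congr 1
  have hb : ∀ i : Fin n, i ∈ Finset.univ →
      ((Polynomial.C (MvPolynomial.X i : MvPolynomial (Fin n) ℝ) - Polynomial.X) ^ (2 * k - 1)).natDegree
        ≤ 2 * k - 1 := by
    intro i _
    refine le_trans (Polynomial.natDegree_pow_le) ?_
    have h2 : (Polynomial.C (MvPolynomial.X i : MvPolynomial (Fin n) ℝ)
        - Polynomial.X).natDegree ≤ 1 :=
      le_trans (Polynomial.natDegree_sub_le _ _) (by simp)
    calc (2 * k - 1) * _ ≤ (2 * k - 1) * 1 := Nat.mul_le_mul_left _ h2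
      _ = 2 * k - 1 := by omega
  have h := Polynomial.coeff_prod_of_natDegree_le (s := Finset.univ)
    (fun i : Fin n => (Polynomial.C (MvPolynomial.X i : MvPolynomial (Fin n) ℝ)
      - Polynomial.X) ^ (2 * k - 1)) (2 * k - 1) hb
  rw [Finset.card_univ, Fintype.card_fin] at h
  rw [h]
  have hcoef : ∀ i : Fin n,
      ((Polynomial.C (MvPolynomial.X i : MvPolynomial (Fin n) ℝ) - Polynomial.X) ^ (2 * k - 1)).coeff (2 * k - 1)
        = (-1 : MvPolynomial (Fin n) ℝ) ^ (2 * k - 1) := by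
    intro i
    have h2 : (Polynomial.C (MvPolynomial.X i : MvPolynomial (Fin n) ℝ)
        - Polynomial.X).natDegree ≤ 1 :=
      le_trans (Polynomial.natDegree_sub_le _ _) (by simp)
    have h3 := Polynomial.coeff_pow_of_natDegree_le (m := 2 * k - 1) h2
    rw [mul_one] at h3
    rw [h3]
    congr 1
    simp
  rw [Finset.prod_congr rfl fun i _ => hcoef i, Finset.prod_const, Finset.card_univ,
    Fintype.card_fin, ← pow_mul, mul_comm (2 * k - 1) n]

lemma pnk_poly (μ : Measure ℝ) [IsProbabilityMeasure μ]
    (hmom : ∀ j : ℕ, Integrable (fun x : ℝ => x ^ j) μ) (n k : ℕ) (x : ℝ) :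
    ∫ z : Fin n → ℝ, ((∏ i, (z i - x) ^ (2 * k - 1)) * vdm z ^ (2 * k))
      ∂(Measure.pi fun _ => μ)
    = ∑ h ∈ Finset.range (n * (2 * k - 1) + 1),
        (∫ z : Fin n → ℝ, MvPolynomial.eval z ((Spoly n k).coeff h) ∂(Measure.pi fun _ => μ))
          * x ^ h := by
  have hdeg : ∀ z : Fin n → ℝ,
      ((Spoly n k).map (MvPolynomial.eval z)).natDegree < n * (2 * k - 1) + 1 := fun z =>
    Nat.lt_succ_of_le (le_trans Polynomial.natDegree_map_le (Spoly_natDegree_le n k))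
  calc ∫ z : Fin n → ℝ, ((∏ i, (z i - x) ^ (2 * k - 1)) * vdm z ^ (2 * k))
      ∂(Measure.pi fun _ => μ)
      = ∫ z : Fin n → ℝ, ∑ h ∈ Finset.range (n * (2 * k - 1) + 1),
          MvPolynomial.eval z ((Spoly n k).coeff h) * x ^ h ∂(Measure.pi fun _ => μ) := by
        refine integral_congr_ae (Filter.EventuallyEq.of_eq ?_)
        funext z
        rw [← Spoly_eval n k z x, Polynomial.eval_eq_sum_range' (hdeg z)]
        exact Finset.sum_congr rfl fun h _ => by rw [Polynomial.coeff_map]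
    _ = ∑ h ∈ Finset.range (n * (2 * k - 1) + 1),
        (∫ z : Fin n → ℝ, MvPolynomial.eval z ((Spoly n k).coeff h) ∂(Measure.pi fun _ => μ))
          * x ^ h := by
        rw [integral_finset_sum _ (fun h _ => (integrable_mv_eval μ hmom _).mul_const _)]
        exact Finset.sum_congr rfl fun h _ => integral_mul_const _ _

theorem stmt19 {Ω : Type*} [MeasurableSpace Ω] (P : Measure Ω) [IsProbabilityMeasure P]
    (X0 : Ω → ℝ) (hmeas : Measurable X0)
    (hmom : ∀ j : ℕ, Integrable (fun ω => X0 ω ^ j) P)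
    (n k : ℕ) (hn : 1 ≤ n) (hk : 1 ≤ k)
    (mdeg : ℕ) (hmdeg : mdeg = n * (2 * k - 1))
    (X : Fin n → Ω → ℝ) (hXmeas : ∀ i, Measurable (X i))
    (hindep : iIndepFun X P)
    (hid : ∀ i, IdentDistrib (X i) X0 P P)
    (pnk : ℝ → ℝ)
    (hpnk : ∀ x : ℝ, pnk x =
      ∫ ω, (∏ i, (X i ω - x) ^ (2 * k - 1)) * (vdm fun i => X i ω) ^ (2 * k) ∂P)
    (b : ℕ → ℝ)
    (hb : ∀ x : ℝ, pnk x = ∑ h ∈ Finset.range (mdeg + 1),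
      (mdeg.choose h : ℝ) * (-1 : ℝ) ^ h * b (mdeg - h) * x ^ h) :
    ((∀ q : Polynomial ℝ, q.natDegree ≤ n - 1 →
        ∫ ω, q.eval (X0 ω) * pnk (X0 ω) ∂P = 0) ∧
      (∀ l : ℕ, l ≤ n - 1 → ∫ ω, X0 ω ^ l * pnk (X0 ω) ∂P = 0)) ∧
    (∀ r : Fin mdeg → ℂ, Function.Injective r →
      -- `r₁,…,r_m` are roots of `A_m(x) = E[(X−x)^m] = ∑_l C(m,l)·E[X^{m−l}]·(−x)^l`
      (∀ j, ∑ l ∈ Finset.range (mdeg + 1),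
          (mdeg.choose l : ℂ) * ((∫ ω, X0 ω ^ (mdeg - l) ∂P : ℝ) : ℂ) * (-(r j)) ^ l = 0) →
      ∀ cc : Fin mdeg → ℂ,
        (∀ l : ℕ, l ≤ mdeg →
          ((b (mdeg - l) : ℝ) : ℂ) = ∑ j, cc j * r j ^ (mdeg - l)) →
        ∑ j, cc j = ((∫ ω, (vdm fun i => X i ω) ^ (2 * k) ∂P : ℝ) : ℂ)) := by
  
  subst hmdeg
  set μ := P.map X0 with hμ
  haveI : IsProbabilityMeasure μ := Measure.isProbabilityMeasure_map hmeas.aemeasurable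
  have hμmom : ∀ j : ℕ, Integrable (fun x : ℝ => x ^ j) μ := by
    intro j
    rw [hμ]
    exact (integrable_map_measure ((continuous_pow j).measurable).aestronglyMeasurable
      hmeas.aemeasurable).mpr (hmom j)
  have hT : AEMeasurable (fun ω i => X i ω) P := (measurable_pi_lambda _ hXmeas).aemeasurable
  have hmap : P.map (fun ω i => X i ω) = Measure.pi (fun _ : Fin n => μ) := by
    rw [map_tuple_eq_pi P X hXmeas hindep]
    exact congrArg Measure.pi (funext fun i => (hid i).map_eq)
  have hpnk' : ∀ x : ℝ, pnk x = ∫ z : Fin n → ℝ,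
      ((∏ i, (z i - x) ^ (2 * k - 1)) * vdm z ^ (2 * k)) ∂(Measure.pi fun _ => μ) := by
    intro x
    rw [hpnk x, ← hmap]
    have hFc : Continuous fun z : Fin n → ℝ =>
        (∏ i, (z i - x) ^ (2 * k - 1)) * vdm z ^ (2 * k) :=
      (continuous_finset_prod _ fun i _ =>
        ((continuous_apply i).sub continuous_const).pow _).mul (continuous_vdm.pow _)
    exact (integral_map hT hFc.aestronglyMeasurable).symm
  have hvint : ∫ ω, (vdm fun i => X i ω) ^ (2 * k) ∂P
      = ∫ z : Fin n → ℝ, vdm z ^ (2 * k) ∂(Measure.pi fun _ => μ) := by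
    rw [← hmap]
    exact (integral_map hT (continuous_vdm.pow _).aestronglyMeasurable).symm
  have hpnkc : Continuous pnk := by
    have hfe : pnk = fun x => ∑ h ∈ Finset.range (n * (2 * k - 1) + 1),
        ((n * (2 * k - 1)).choose h : ℝ) * (-1 : ℝ) ^ h * b (n * (2 * k - 1) - h) * x ^ h :=
      funext hb
    rw [hfe]
    exact continuous_finset_sum _ fun h _ => continuous_const.mul (continuous_pow h)
  have hmono : ∀ l : ℕ, l ≤ n - 1 → ∫ ω, X0 ω ^ l * pnk (X0 ω) ∂P = 0 := by
    intro l hl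
    have hln : l < n := by omega
    have hstep1 : ∫ ω, X0 ω ^ l * pnk (X0 ω) ∂P = ∫ x, x ^ l * pnk x ∂μ := by
      rw [hμ]
      exact (integral_map hmeas.aemeasurable
        (((continuous_pow l).mul hpnkc).aestronglyMeasurable)).symm
    have h2 : ∫ x, x ^ l * pnk x ∂μ = ∫ x : ℝ, x ^ l *
        ∫ z : Fin n → ℝ, ((∏ i, (z i - x) ^ (2 * k - 1)) * vdm z ^ (2 * k))
          ∂(Measure.pi fun _ => μ) ∂μ := by
      refine integral_congr_ae (Filter.EventuallyEq.of_eq ?_)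
      funext x
      rw [hpnk' x]
    rw [hstep1, h2, ← fubini_G μ hμmom n k l]
    exact key_zero μ hμmom n k l hk hln
  refine ⟨⟨?_, hmono⟩, ?_⟩
  · intro q hq
    have hint : ∀ i : ℕ, Integrable (fun ω => X0 ω ^ i * pnk (X0 ω)) P := by
      intro i
      have heq : (fun ω => X0 ω ^ i * pnk (X0 ω)) = fun ω =>
          ∑ h ∈ Finset.range (n * (2 * k - 1) + 1),
            (((n * (2 * k - 1)).choose h : ℝ) * (-1 : ℝ) ^ h * b (n * (2 * k - 1) - h))
              * X0 ω ^ (i + h) := by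
        funext ω
        rw [hb (X0 ω), Finset.mul_sum]
        exact Finset.sum_congr rfl fun h _ => by ring
      rw [heq]
      exact integrable_finset_sum _ fun h _ => (hmom (i + h)).const_mul _
    have heq2 : (fun ω => q.eval (X0 ω) * pnk (X0 ω)) = fun ω =>
        ∑ i ∈ Finset.range (q.natDegree + 1), q.coeff i * (X0 ω ^ i * pnk (X0 ω)) := by
      funext ω
      rw [Polynomial.eval_eq_sum_range, Finset.sum_mul]
      exact Finset.sum_congr rfl fun i _ => by ring
    rw [heq2, integral_finset_sum _ (fun i _ => (hint i).const_mul _)]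
    refine Finset.sum_eq_zero fun i hi => ?_
    rw [integral_const_mul, hmono i (by
      have := Finset.mem_range.mp hi
      omega), mul_zero]
  · intro r hrinj hroot cc hcc
    have h0 := hcc (n * (2 * k - 1)) le_rfl
    rw [Nat.sub_self] at h0
    simp only [pow_zero, mul_one] at h0
    have hb0 : b 0 = ∫ ω, (vdm fun i => X i ω) ^ (2 * k) ∂P := by
      have hexp : ∀ x : ℝ, ∑ h ∈ Finset.range (n * (2 * k - 1) + 1),
          (∫ z : Fin n → ℝ, MvPolynomial.eval z ((Spoly n k).coeff h)
            ∂(Measure.pi fun _ => μ)) * x ^ h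
          = ∑ h ∈ Finset.range (n * (2 * k - 1) + 1),
            (((n * (2 * k - 1)).choose h : ℝ) * (-1 : ℝ) ^ h * b (n * (2 * k - 1) - h)) * x ^ h := by
        intro x
        rw [← pnk_poly μ hμmom n k x, ← hpnk' x, hb x]
      have hco := poly_coeff_eq _ _ hexp (n * (2 * k - 1)) le_rfl
      rw [Nat.choose_self, Nat.sub_self, Nat.cast_one, one_mul] at hco
      have hev : ∀ z : Fin n → ℝ, MvPolynomial.eval z ((Spoly n k).coeff (n * (2 * k - 1)))
          = (-1 : ℝ) ^ (n * (2 * k - 1)) * vdm z ^ (2 * k) := by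
        intro z
        rw [Spoly_coeff_top]
        rw [map_mul, map_pow, map_pow, vP_eval]
        simp
      have hlhs : ∫ z : Fin n → ℝ, MvPolynomial.eval z ((Spoly n k).coeff (n * (2 * k - 1)))
          ∂(Measure.pi fun _ => μ)
          = (-1 : ℝ) ^ (n * (2 * k - 1)) *
            ∫ z : Fin n → ℝ, vdm z ^ (2 * k) ∂(Measure.pi fun _ => μ) := by
        rw [show (fun z : Fin n → ℝ => MvPolynomial.eval z ((Spoly n k).coeff (n * (2 * k - 1))))
          = fun z => (-1 : ℝ) ^ (n * (2 * k - 1)) * vdm z ^ (2 * k) from funext hev]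
        exact integral_const_mul _ _
      rw [hlhs] at hco
      have hne : ((-1 : ℝ) ^ (n * (2 * k - 1))) ≠ 0 := pow_ne_zero _ (by norm_num)
      have := mul_left_cancel₀ hne hco
      rw [hvint, ← this]
    rw [hb0] at h0
    exact h0.symm
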